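/- Let a > 0. The Charlier functions form an orthonormal family in ℓ²(ℕ): for all k, l ∈ ℕ, Σ_{x∈ℕ} f_k^{(a)}(x) f_l^{(a)}(x) = 1 if k = l and 0 otherwise. Equivalently, Σ_{x∈ℕ} (e^{−a} a^x/x!) C_k^{(a)}(x) C_l^{(a)}(x) = δ_{kl} · k!/a^k. -/

import Mathlib

open Real Nat

lemma hasSum_poisson_choose (a : ℝ) (m : ℕ) :
    HasSum (fun x : ℕ => Real.exp (-a) * a ^ x / (x ! : ℝ) * (x.choose m : ℝ))
      (a ^ m / (m ! : ℝ)) := by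
  have h0 : HasSum (fun y : ℕ => a ^ y / (y ! : ℝ)) (Real.exp a) := by
    rw [Real.exp_eq_exp_ℝ]; exact NormedSpace.expSeries_div_hasSum_exp a
  have h1 : HasSum (fun y : ℕ => (Real.exp (-a) * (a ^ m / (m ! : ℝ))) * (a ^ y / (y ! : ℝ)))
      ((Real.exp (-a) * (a ^ m / (m ! : ℝ))) * Real.exp a) := h0.mul_left _
  have hval : (Real.exp (-a) * (a ^ m / (m ! : ℝ))) * Real.exp a = a ^ m / (m ! : ℝ) := by
    rw [Real.exp_neg]
    field_simp
  rw [hval] at h1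
  have hinj : Function.Injective (fun y : ℕ => y + m) := add_left_injective m
  have hz : ∀ x ∉ Set.range (fun y : ℕ => y + m),
      Real.exp (-a) * a ^ x / (x ! : ℝ) * (x.choose m : ℝ) = 0 := by
    intro x hx
    have hxm : x < m := by
      by_contra h
      exact hx ⟨x - m, show x - m + m = x by omega⟩
    rw [Nat.choose_eq_zero_of_lt hxm]
    simp
  rw [← Function.Injective.hasSum_iff hinj hz]
  refine h1.congr_fun fun y => ?_
  show Real.exp (-a) * a ^ (y + m) / (((y + m)! : ℝ)) * (((y + m).choose m : ℝ))
      = (Real.exp (-a) * (a ^ m / (m ! : ℝ))) * (a ^ y / (y ! : ℝ))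
  have hfac : (((y + m).choose m : ℝ)) * (y ! : ℝ) * (m ! : ℝ) = (((y + m)! : ℝ)) := by
    exact_mod_cast congrArg (Nat.cast (R := ℝ)) (Nat.add_choose_mul_factorial_mul_factorial y m)
  have hy : (y ! : ℝ) ≠ 0 := Nat.cast_ne_zero.2 (Nat.factorial_ne_zero y)
  have hm : (m ! : ℝ) ≠ 0 := Nat.cast_ne_zero.2 (Nat.factorial_ne_zero m)
  have hym : (((y+m)! : ℝ)) ≠ 0 := Nat.cast_ne_zero.2 (Nat.factorial_ne_zero _)
  field_simp
  rw [← hfac, pow_add]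
  ring

lemma hasSum_poisson_choose_mul (a : ℝ) (i j : ℕ) :
    HasSum (fun x : ℕ =>
        Real.exp (-a) * a ^ x / (x ! : ℝ) * (x.choose i : ℝ) * (x.choose j : ℝ))
      (∑ m ∈ Finset.range (j + 1),
        a ^ i / (i ! : ℝ) * (i.choose (j - m) : ℝ) * (a ^ m / (m ! : ℝ))) := by
  have h1 : HasSum (fun y : ℕ => ∑ m ∈ Finset.range (j + 1),
        (a ^ i / (i ! : ℝ) * (i.choose (j - m) : ℝ)) *
          (Real.exp (-a) * a ^ y / (y ! : ℝ) * (y.choose m : ℝ)))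
      (∑ m ∈ Finset.range (j + 1),
        (a ^ i / (i ! : ℝ) * (i.choose (j - m) : ℝ)) * (a ^ m / (m ! : ℝ))) :=
    hasSum_sum fun m _ => (hasSum_poisson_choose a m).mul_left _
  have hinj : Function.Injective (fun y : ℕ => y + i) := add_left_injective i
  have hz : ∀ x ∉ Set.range (fun y : ℕ => y + i),
      Real.exp (-a) * a ^ x / (x ! : ℝ) * (x.choose i : ℝ) * (x.choose j : ℝ) = 0 := by
    intro x hx
    have hxm : x < i := by
      by_contra h
      exact hx ⟨x - i, show x - i + i = x by omega⟩
    rw [Nat.choose_eq_zero_of_lt hxm]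
    simp
  have hsum_eq : (∑ m ∈ Finset.range (j + 1),
        (a ^ i / (i ! : ℝ) * (i.choose (j - m) : ℝ)) * (a ^ m / (m ! : ℝ)))
      = ∑ m ∈ Finset.range (j + 1),
        a ^ i / (i ! : ℝ) * (i.choose (j - m) : ℝ) * (a ^ m / (m ! : ℝ)) := by
    refine Finset.sum_congr rfl fun m _ => by ring
  rw [← hsum_eq, ← Function.Injective.hasSum_iff hinj hz]
  refine h1.congr_fun fun y => ?_
  show Real.exp (-a) * a ^ (y + i) / (((y + i)! : ℝ)) * (((y + i).choose i : ℝ))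
        * (((y + i).choose j : ℝ))
      = ∑ m ∈ Finset.range (j + 1),
        (a ^ i / (i ! : ℝ) * (i.choose (j - m) : ℝ)) *
          (Real.exp (-a) * a ^ y / (y ! : ℝ) * (y.choose m : ℝ))
  have hvdm : (((y + i).choose j : ℝ))
      = ∑ m ∈ Finset.range (j + 1), (y.choose m : ℝ) * (i.choose (j - m) : ℝ) := by
    rw [Nat.add_choose_eq, Finset.Nat.sum_antidiagonal_eq_sum_range_succ_mk]
    push_cast
    rfl
  have hfac : (((y + i).choose i : ℝ)) * (y ! : ℝ) * (i ! : ℝ) = (((y + i)! : ℝ)) := by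
    exact_mod_cast congrArg (Nat.cast (R := ℝ)) (Nat.add_choose_mul_factorial_mul_factorial y i)
  have hy : (y ! : ℝ) ≠ 0 := Nat.cast_ne_zero.2 (Nat.factorial_ne_zero y)
  have hi : (i ! : ℝ) ≠ 0 := Nat.cast_ne_zero.2 (Nat.factorial_ne_zero i)
  have hyi : (((y+i)! : ℝ)) ≠ 0 := Nat.cast_ne_zero.2 (Nat.factorial_ne_zero _)
  have hchoose : Real.exp (-a) * a ^ (y + i) / (((y + i)! : ℝ)) * (((y + i).choose i : ℝ))
      = a ^ i / (i ! : ℝ) * (Real.exp (-a) * a ^ y / (y ! : ℝ)) := by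
    field_simp
    rw [← hfac, pow_add]
    ring
  rw [hchoose, hvdm, Finset.mul_sum]
  exact Finset.sum_congr rfl fun m _ => by ring

lemma alt_choose_sum (k r : ℕ) :
    ∑ i ∈ Finset.range (k + 1), (-1 : ℝ) ^ i * (k.choose i : ℝ) * (i.choose r : ℝ)
      = if r = k then (-1 : ℝ) ^ k else 0 := by
  rcases le_or_gt r k with hrk | hrk
  · have h1 : ∑ i ∈ Finset.range (k + 1), (-1 : ℝ) ^ i * (k.choose i : ℝ) * (i.choose r : ℝ)
        = ∑ i ∈ Finset.Ico r (k + 1), (-1 : ℝ) ^ i * (k.choose i : ℝ) * (i.choose r : ℝ) := by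
      rw [Finset.range_eq_Ico]
      refine (Finset.sum_subset (Finset.Ico_subset_Ico (Nat.zero_le r) le_rfl)
        fun i hi hni => ?_).symm
      have : i < r := by
        simp only [Finset.mem_Ico] at hi hni
        omega
      rw [Nat.choose_eq_zero_of_lt this]
      ring
    rw [h1, Finset.sum_Ico_eq_sum_range]
    have h2 : ∀ t ∈ Finset.range (k + 1 - r),
        (-1 : ℝ) ^ (r + t) * (k.choose (r + t) : ℝ) * ((r + t).choose r : ℝ)
          = ((-1 : ℝ) ^ r * (k.choose r : ℝ)) * ((-1 : ℝ) ^ t * ((k - r).choose t : ℝ)) := by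
      intro t ht
      have hle : r + t ≤ k := by
        simp only [Finset.mem_range] at ht
        omega
      have := Nat.choose_mul (n := k) (Nat.le_add_right r t)
      rw [Nat.add_sub_cancel_left] at this
      have hcast : (k.choose (r + t) : ℝ) * ((r + t).choose r : ℝ)
          = (k.choose r : ℝ) * ((k - r).choose t : ℝ) := by exact_mod_cast congrArg Nat.cast this
      rw [pow_add]
      linear_combination ((-1 : ℝ) ^ r * (-1 : ℝ) ^ t) * hcast
    rw [Finset.sum_congr rfl h2, ← Finset.mul_sum]
    have h3 : k + 1 - r = (k - r) + 1 := by omega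
    have h4 : ∑ t ∈ Finset.range ((k - r) + 1), (-1 : ℝ) ^ t * ((k - r).choose t : ℝ)
        = if k - r = 0 then 1 else 0 := by
      exact_mod_cast congrArg (Int.cast (R := ℝ)) (Int.alternating_sum_range_choose (n := k - r))
    rw [h3, h4]
    rcases eq_or_ne r k with h | h
    · subst h
      simp
    · rw [if_neg (by omega), if_neg h, mul_zero]
  · have : ∀ i ∈ Finset.range (k + 1),
        (-1 : ℝ) ^ i * (k.choose i : ℝ) * (i.choose r : ℝ) = 0 := by
      intro i hi
      simp only [Finset.mem_range] at hi
      have hir : i < r := by omega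
      rw [Nat.choose_eq_zero_of_lt hir]
      ring
    rw [Finset.sum_eq_zero this, if_neg (by omega)]

lemma charlier_T (a : ℝ) (ha : 0 < a) (k l : ℕ) :
    ∑ i ∈ Finset.range (k + 1), ∑ j ∈ Finset.range (l + 1),
      (((k.choose i : ℝ) * (i ! : ℝ) * (-1 / a) ^ i) * ((l.choose j : ℝ) * (j ! : ℝ) * (-1 / a) ^ j)) *
        (∑ m ∈ Finset.range (j + 1),
          a ^ i / (i ! : ℝ) * (i.choose (j - m) : ℝ) * (a ^ m / (m ! : ℝ)))
      = if k = l then (k ! : ℝ) / a ^ k else 0 := by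
  have ha' : a ≠ 0 := ha.ne'
  rw [Finset.sum_comm]
  have sub1 : ∀ j, ∑ i ∈ Finset.range (k + 1),
      (((k.choose i : ℝ) * (i ! : ℝ) * (-1 / a) ^ i) * ((l.choose j : ℝ) * (j ! : ℝ) * (-1 / a) ^ j)) *
        (∑ m ∈ Finset.range (j + 1),
          a ^ i / (i ! : ℝ) * (i.choose (j - m) : ℝ) * (a ^ m / (m ! : ℝ)))
      = ((l.choose j : ℝ) * (j ! : ℝ) * (-1 / a) ^ j) *
          (if k ≤ j then (-1 : ℝ) ^ k * a ^ (j - k) / ((j - k)! : ℝ) else 0) := by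
    intro j
    have step1 : ∀ i ∈ Finset.range (k + 1),
        (((k.choose i : ℝ) * (i ! : ℝ) * (-1 / a) ^ i) * ((l.choose j : ℝ) * (j ! : ℝ) * (-1 / a) ^ j)) *
          (∑ m ∈ Finset.range (j + 1),
            a ^ i / (i ! : ℝ) * (i.choose (j - m) : ℝ) * (a ^ m / (m ! : ℝ)))
        = ((l.choose j : ℝ) * (j ! : ℝ) * (-1 / a) ^ j) *
            (∑ m ∈ Finset.range (j + 1),
              (a ^ m / (m ! : ℝ)) * ((-1 : ℝ) ^ i * (k.choose i : ℝ) * (i.choose (j - m) : ℝ))) := by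
      intro i _
      rw [Finset.mul_sum, Finset.mul_sum]
      refine Finset.sum_congr rfl fun m _ => ?_
      have hi : (i ! : ℝ) ≠ 0 := Nat.cast_ne_zero.2 (Nat.factorial_ne_zero i)
      have hneg : (-1 / a) ^ i * a ^ i = (-1 : ℝ) ^ i := by
        rw [← mul_pow]
        congr 1
        field_simp
      rw [← hneg]
      field_simp
    rw [Finset.sum_congr rfl step1, ← Finset.mul_sum, Finset.sum_comm]
    congr 1
    have step2 : ∀ m ∈ Finset.range (j + 1),
        ∑ i ∈ Finset.range (k + 1),
          (a ^ m / (m ! : ℝ)) * ((-1 : ℝ) ^ i * (k.choose i : ℝ) * (i.choose (j - m) : ℝ))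
        = (a ^ m / (m ! : ℝ)) * (if j - m = k then (-1 : ℝ) ^ k else 0) := by
      intro m _
      rw [← Finset.mul_sum, alt_choose_sum k (j - m)]
    rw [Finset.sum_congr rfl step2]
    rcases le_or_gt k j with hkj | hkj
    · rw [if_pos hkj]
      rw [Finset.sum_eq_single_of_mem (j - k) (Finset.mem_range.2 (by omega))]
      · rw [if_pos (by omega)]
        ring
      · intro m hm hne
        rw [if_neg (by simp only [Finset.mem_range] at hm; omega), mul_zero]
    · rw [if_neg (by omega)]
      refine Finset.sum_eq_zero fun m hm => ?_
      rw [if_neg (by simp only [Finset.mem_range] at hm; omega), mul_zero]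
  rw [Finset.sum_congr rfl fun j _ => sub1 j]
  have sub2 : ∀ j ∈ Finset.range (l + 1),
      ((l.choose j : ℝ) * (j ! : ℝ) * (-1 / a) ^ j) *
          (if k ≤ j then (-1 : ℝ) ^ k * a ^ (j - k) / ((j - k)! : ℝ) else 0)
        = ((k ! : ℝ) / a ^ k) * ((-1 : ℝ) ^ k *
            ((-1 : ℝ) ^ j * (l.choose j : ℝ) * (j.choose k : ℝ))) := by
    intro j _
    rcases le_or_gt k j with hkj | hkj
    · rw [if_pos hkj]
      have hfac : (j.choose k : ℝ) * (k ! : ℝ) * ((j - k)! : ℝ) = (j ! : ℝ) := by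
        exact_mod_cast congrArg (Nat.cast (R := ℝ)) (Nat.choose_mul_factorial_mul_factorial hkj)
      have hpow : a ^ (j - k) * a ^ k = a ^ j := by
        rw [← pow_add]
        congr 1
        omega
      have hjk : ((j - k)! : ℝ) ≠ 0 := Nat.cast_ne_zero.2 (Nat.factorial_ne_zero _)
      have hneg : (-1 / a) ^ j = (-1 : ℝ) ^ j / a ^ j := div_pow _ _ _
      rw [hneg, ← hfac, ← hpow]
      have haj : a ^ (j - k) ≠ 0 := pow_ne_zero _ ha'
      have hak : a ^ k ≠ 0 := pow_ne_zero _ ha'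
      field_simp
    · rw [if_neg (by omega), Nat.choose_eq_zero_of_lt hkj, mul_zero]
      push_cast
      ring
  rw [Finset.sum_congr rfl sub2, ← Finset.mul_sum]
  rw [show ∑ j ∈ Finset.range (l + 1), ((-1 : ℝ) ^ k *
        ((-1 : ℝ) ^ j * (l.choose j : ℝ) * (j.choose k : ℝ)))
      = (-1 : ℝ) ^ k * ∑ j ∈ Finset.range (l + 1),
        ((-1 : ℝ) ^ j * (l.choose j : ℝ) * (j.choose k : ℝ)) from (Finset.mul_sum _ _ _).symm]
  rw [alt_choose_sum l k]
  rcases eq_or_ne k l with h | h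
  · subst h
    rw [if_pos rfl, if_pos rfl]
    rw [← mul_assoc]
    rw [mul_comm ((k ! : ℝ) / a ^ k) ((-1 : ℝ) ^ k), mul_assoc]
    rw [show (-1 : ℝ) ^ k * ((k ! : ℝ) / a ^ k * (-1 : ℝ) ^ k) = ((-1 : ℝ) ^ k * (-1 : ℝ) ^ k) * ((k ! : ℝ) / a ^ k) by ring]
    rw [← pow_add, Even.neg_one_pow ⟨k, by omega⟩, one_mul]
  · rw [if_neg h, if_neg h, mul_zero, mul_zero]

/-- The Charlier polynomial of parameter `a > 0`:
`C_k^{(a)}(x) = Σ_{j=0}^{k} binom(k,j)·binom(x,j)·j!·(−1/a)^j` for `x ∈ ℕ`. -/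
noncomputable def charlier (a : ℝ) (k x : ℕ) : ℝ :=
  ∑ j ∈ Finset.range (k + 1),
    (k.choose j : ℝ) * (x.choose j : ℝ) * (j ! : ℝ) * (-1 / a) ^ j

/-- The `k`-th Charlier function `f_k^{(a)}(x) = e^{−a/2} √(a^{x+k}/(x!·k!)) · C_k^{(a)}(x)`. -/
noncomputable def charlierFun (a : ℝ) (k x : ℕ) : ℝ :=
  Real.exp (-a / 2) * Real.sqrt (a ^ (x + k) / ((x ! : ℝ) * (k ! : ℝ))) * charlier a k x

lemma charlier_part2 (a : ℝ) (ha : 0 < a) (k l : ℕ) :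
    HasSum
      (fun x : ℕ => Real.exp (-a) * a ^ x / (x ! : ℝ) * charlier a k x * charlier a l x)
      (if k = l then (k ! : ℝ) / a ^ k else 0) := by
  have H : HasSum (fun x : ℕ => ∑ i ∈ Finset.range (k + 1), ∑ j ∈ Finset.range (l + 1),
        (((k.choose i : ℝ) * (i ! : ℝ) * (-1 / a) ^ i) *
          ((l.choose j : ℝ) * (j ! : ℝ) * (-1 / a) ^ j)) *
          (Real.exp (-a) * a ^ x / (x ! : ℝ) * (x.choose i : ℝ) * (x.choose j : ℝ)))
      (∑ i ∈ Finset.range (k + 1), ∑ j ∈ Finset.range (l + 1),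
        (((k.choose i : ℝ) * (i ! : ℝ) * (-1 / a) ^ i) *
          ((l.choose j : ℝ) * (j ! : ℝ) * (-1 / a) ^ j)) *
          (∑ m ∈ Finset.range (j + 1),
            a ^ i / (i ! : ℝ) * (i.choose (j - m) : ℝ) * (a ^ m / (m ! : ℝ)))) :=
    hasSum_sum fun i _ => hasSum_sum fun j _ => (hasSum_poisson_choose_mul a i j).mul_left _
  rw [charlier_T a ha k l] at H
  refine H.congr_fun fun x => ?_
  simp only [charlier, Finset.mul_sum, Finset.sum_mul]
  rw [Finset.sum_comm]
  refine Finset.sum_congr rfl fun i _ => ?_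
  refine Finset.sum_congr rfl fun j _ => ?_
  ring

/-- For `a > 0`, the Charlier functions form an orthonormal family in `ℓ²(ℕ)`:
`Σ_{x∈ℕ} f_k^{(a)}(x) f_l^{(a)}(x) = δ_{kl}`. Equivalently,
`Σ_{x∈ℕ} (e^{−a} a^x/x!) C_k^{(a)}(x) C_l^{(a)}(x) = δ_{kl} · k!/a^k`. -/
theorem charlierFun_orthonormal (a : ℝ) (ha : 0 < a) :
    (∀ k l : ℕ, HasSum (fun x : ℕ => charlierFun a k x * charlierFun a l x)
        (if k = l then 1 else 0)) ∧
      (∀ k l : ℕ, HasSum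
        (fun x : ℕ => Real.exp (-a) * a ^ x / (x ! : ℝ) * charlier a k x * charlier a l x)
        (if k = l then (k ! : ℝ) / a ^ k else 0)) := by
  refine ⟨fun k l => ?_, fun k l => charlier_part2 a ha k l⟩
  have h2 := charlier_part2 a ha k l
  set s : ℝ := Real.sqrt (a ^ (k + l) / ((k ! : ℝ) * (l ! : ℝ))) with hs_def
  have H := h2.mul_left s
  have hk : (0 : ℝ) < (k ! : ℝ) := by exact_mod_cast Nat.factorial_pos k
  have hl : (0 : ℝ) < (l ! : ℝ) := by exact_mod_cast Nat.factorial_pos l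
  have hval : s * (if k = l then (k ! : ℝ) / a ^ k else 0) = if k = l then 1 else 0 := by
    rcases eq_or_ne k l with h | h
    · subst h
      rw [if_pos rfl, if_pos rfl]
      have harg : a ^ (k + k) / ((k ! : ℝ) * (k ! : ℝ)) = (a ^ k / (k ! : ℝ)) ^ 2 := by
        rw [pow_add]
        field_simp
      have hs : s = a ^ k / (k ! : ℝ) := by
        rw [hs_def, harg, Real.sqrt_sq (by positivity)]
      rw [hs]
      field_simp
    · rw [if_neg h, if_neg h, mul_zero]
  rw [hval] at H
  refine H.congr_fun fun x => ?_
  show charlierFun a k x * charlierFun a l x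
      = s * (Real.exp (-a) * a ^ x / (x ! : ℝ) * charlier a k x * charlier a l x)
  have hx : (0 : ℝ) < (x ! : ℝ) := by exact_mod_cast Nat.factorial_pos x
  have hexp : Real.exp (-a / 2) * Real.exp (-a / 2) = Real.exp (-a) := by
    rw [← Real.exp_add]
    norm_num
  have hsqrt : Real.sqrt (a ^ (x + k) / ((x ! : ℝ) * (k ! : ℝ))) *
      Real.sqrt (a ^ (x + l) / ((x ! : ℝ) * (l ! : ℝ)))
      = (a ^ x / (x ! : ℝ)) * s := by
    rw [hs_def, ← Real.sqrt_mul (by positivity)]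
    have harg : a ^ (x + k) / ((x ! : ℝ) * (k ! : ℝ)) * (a ^ (x + l) / ((x ! : ℝ) * (l ! : ℝ)))
        = (a ^ x / (x ! : ℝ)) ^ 2 * (a ^ (k + l) / ((k ! : ℝ) * (l ! : ℝ))) := by
      rw [pow_add, pow_add, pow_add]
      field_simp
    rw [harg, Real.sqrt_mul (sq_nonneg _), Real.sqrt_sq (by positivity)]
  simp only [charlierFun]
  rw [show Real.exp (-a / 2) * Real.sqrt (a ^ (x + k) / ((x ! : ℝ) * (k ! : ℝ))) * charlier a k x *
        (Real.exp (-a / 2) * Real.sqrt (a ^ (x + l) / ((x ! : ℝ) * (l ! : ℝ))) * charlier a l x)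
      = (Real.exp (-a / 2) * Real.exp (-a / 2)) *
        (Real.sqrt (a ^ (x + k) / ((x ! : ℝ) * (k ! : ℝ))) *
          Real.sqrt (a ^ (x + l) / ((x ! : ℝ) * (l ! : ℝ)))) *
        (charlier a k x * charlier a l x) from by ring]
  rw [hexp, hsqrt]
  ring
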